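/- Let X be uniformly distributed on {0,1}ⁿ and let Y be obtained from X by flipping each coordinate independently with probability ε ∈ [0,1/2]. For a boolean function f : {0,1}ⁿ → {0,1}, the mutual information satisfies I(f(X); Y) = Ent(T_ε f) + Ent(T_ε(1−f)), where for a nonnegative function g on {0,1}ⁿ, Ent(g) = 𝔼[g·log₂ g] − 𝔼g·log₂ 𝔼g, and T_ε is the noise operator. -/

import Mathlib

open Finset

noncomputable def expec (n : ℕ) (f : (Fin n → Bool) → ℝ) : ℝ :=
  (∑ x : Fin n → Bool, f x) / 2 ^ n

noncomputable def walsh (n : ℕ) (S : Finset (Fin n)) (x : Fin n → Bool) : ℝ :=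
  ∏ i ∈ S, (if x i then (-1 : ℝ) else 1)

noncomputable def fcoef (n : ℕ) (f : (Fin n → Bool) → ℝ) (S : Finset (Fin n)) : ℝ :=
  expec n (fun x => f x * walsh n S x)

def comp (n : ℕ) (x : Fin n → Bool) : Fin n → Bool := fun i => !(x i)

noncomputable def evenPart (n : ℕ) (f : (Fin n → Bool) → ℝ) (x : Fin n → Bool) : ℝ :=
  (f x + f (comp n x)) / 2

noncomputable def oddPart (n : ℕ) (f : (Fin n → Bool) → ℝ) (x : Fin n → Bool) : ℝ :=
  f x - evenPart n f x

noncomputable def noiseK (n : ℕ) (ε : ℝ) (x y : Fin n → Bool) : ℝ :=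
  ∏ i : Fin n, (if x i = y i then 1 - ε else ε)

noncomputable def noiseOp (n : ℕ) (ε : ℝ) (f : (Fin n → Bool) → ℝ) (x : Fin n → Bool) : ℝ :=
  ∑ y : Fin n → Bool, noiseK n ε x y * f y

noncomputable def entro (n : ℕ) (g : (Fin n → Bool) → ℝ) : ℝ :=
  expec n (fun x => g x * Real.logb 2 (g x)) - expec n g * Real.logb 2 (expec n g)

noncomputable def varia (n : ℕ) (g : (Fin n → Bool) → ℝ) : ℝ :=
  expec n (fun x => g x ^ 2) - (expec n g) ^ 2

noncomputable def jointP (n : ℕ) (ε : ℝ) (f : (Fin n → Bool) → ℝ) (b : Bool)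
    (y : Fin n → Bool) : ℝ :=
  (∑ x : Fin n → Bool, if f x = (if b then (1 : ℝ) else 0) then noiseK n ε x y else 0) / 2 ^ n

noncomputable def margB (n : ℕ) (f : (Fin n → Bool) → ℝ) (b : Bool) : ℝ :=
  (∑ x : Fin n → Bool, if f x = (if b then (1 : ℝ) else 0) then (1 : ℝ) else 0) / 2 ^ n

noncomputable def margY (n : ℕ) (ε : ℝ) (f : (Fin n → Bool) → ℝ) (y : Fin n → Bool) : ℝ :=
  ∑ b : Bool, jointP n ε f b y

/-- Mutual information (in bits) between the bit `f(X)` and the noisy copy `Y`,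
where `X` is uniform on the hypercube and `Y` is obtained by flipping each
coordinate of `X` independently with probability `ε`. Terms with zero joint
probability contribute `0` (since `Real.logb 2 0 = 0`). -/
noncomputable def mutInfo (n : ℕ) (ε : ℝ) (f : (Fin n → Bool) → ℝ) : ℝ :=
  ∑ y : Fin n → Bool, ∑ b : Bool,
    jointP n ε f b y * Real.logb 2 (jointP n ε f b y / (margB n f b * margY n ε f y))

noncomputable def binEnt (x : ℝ) : ℝ := -x * Real.logb 2 x - (1 - x) * Real.logb 2 (1 - x)


lemma noiseK_symm (n : ℕ) (ε : ℝ) (x y : Fin n → Bool) :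
    noiseK n ε x y = noiseK n ε y x := by
  unfold noiseK
  apply Finset.prod_congr rfl
  intro i _
  simp [eq_comm]

lemma sum_noiseK (n : ℕ) (ε : ℝ) (y : Fin n → Bool) :
    ∑ x : Fin n → Bool, noiseK n ε x y = 1 := by
  unfold noiseK
  rw [← Fintype.piFinset_univ,
    ← Finset.prod_univ_sum (fun _ : Fin n => (univ : Finset Bool))
      (fun i b => if b = y i then 1 - ε else ε)]
  rw [Finset.prod_eq_one]
  intro i _
  cases hy : y i <;> simp [hy]

lemma sum_noiseK' (n : ℕ) (ε : ℝ) (x : Fin n → Bool) :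
    ∑ y : Fin n → Bool, noiseK n ε x y = 1 := by
  simp_rw [noiseK_symm n ε x]
  exact sum_noiseK n ε x

lemma expec_noiseOp (n : ℕ) (ε : ℝ) (g : (Fin n → Bool) → ℝ) :
    expec n (noiseOp n ε g) = expec n g := by
  unfold expec noiseOp
  congr 1
  rw [Finset.sum_comm]
  apply Finset.sum_congr rfl
  intro x _
  rw [← Finset.sum_mul, sum_noiseK n ε x, one_mul]

lemma noiseOp_nonneg (n : ℕ) (ε : ℝ) (h0 : 0 ≤ ε) (h1 : ε ≤ 1/2)
    (g : (Fin n → Bool) → ℝ) (hg : ∀ x, 0 ≤ g x) (y : Fin n → Bool) :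
    0 ≤ noiseOp n ε g y := by
  apply Finset.sum_nonneg
  intro x _
  apply mul_nonneg _ (hg x)
  apply Finset.prod_nonneg
  intro i _
  split <;> [linarith; exact h0]

lemma keyE (n : ℕ) (g : (Fin n → Bool) → ℝ) (hg : ∀ y, 0 ≤ g y) :
    ∑ y : Fin n → Bool,
      (g y / 2 ^ n) * Real.logb 2 ((g y / 2 ^ n) / (expec n g * (1 / 2 ^ n)))
      = entro n g := by
  have h2 : (2:ℝ) ^ n ≠ 0 := by positivity
  have hpoint : ∀ y : Fin n → Bool,
      (g y / 2 ^ n) * Real.logb 2 ((g y / 2 ^ n) / (expec n g * (1 / 2 ^ n)))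
      = (g y * Real.logb 2 (g y)) / 2 ^ n - (g y * Real.logb 2 (expec n g)) / 2 ^ n := by
    intro y
    rcases eq_or_lt_of_le (hg y) with h0|h0
    · simp [← h0]
    · have hm : 0 < expec n g := by
        have hle : g y ≤ ∑ z : Fin n → Bool, g z :=
          Finset.single_le_sum (fun z _ => hg z) (mem_univ y)
        have hs : 0 < ∑ z : Fin n → Bool, g z := lt_of_lt_of_le h0 hle
        unfold expec
        positivity
      have hq : (g y / 2 ^ n) / (expec n g * (1 / 2 ^ n)) = g y / expec n g := by
        field_simp
      rw [hq, Real.logb_div (ne_of_gt h0) (ne_of_gt hm)]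
      ring
  rw [Finset.sum_congr rfl (fun y _ => hpoint y), Finset.sum_sub_distrib]
  have h3 : ∑ y : Fin n → Bool, (g y * Real.logb 2 (expec n g)) / 2 ^ n
      = expec n g * Real.logb 2 (expec n g) := by
    rw [← Finset.sum_div, ← Finset.sum_mul]
    unfold expec
    ring
  rw [h3]
  unfold entro expec
  rw [← Finset.sum_div]

lemma jointP_true (n : ℕ) (ε : ℝ) (f : (Fin n → Bool) → ℝ)
    (hf : ∀ x, f x = 0 ∨ f x = 1) (y : Fin n → Bool) :
    jointP n ε f true y = noiseOp n ε f y / 2 ^ n := by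
  unfold jointP noiseOp
  congr 1
  apply Finset.sum_congr rfl
  intro x _
  rcases hf x with h|h
  · simp [h]
  · simp [h, noiseK_symm n ε y x]

lemma jointP_false (n : ℕ) (ε : ℝ) (f : (Fin n → Bool) → ℝ)
    (hf : ∀ x, f x = 0 ∨ f x = 1) (y : Fin n → Bool) :
    jointP n ε f false y = noiseOp n ε (fun x => 1 - f x) y / 2 ^ n := by
  unfold jointP noiseOp
  congr 1
  apply Finset.sum_congr rfl
  intro x _
  rcases hf x with h|h
  · simp [h, noiseK_symm n ε y x]
  · simp [h]

lemma margY_eq (n : ℕ) (ε : ℝ) (f : (Fin n → Bool) → ℝ)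
    (hf : ∀ x, f x = 0 ∨ f x = 1) (y : Fin n → Bool) :
    margY n ε f y = 1 / 2 ^ n := by
  unfold margY
  rw [Fintype.sum_bool, jointP_true n ε f hf y, jointP_false n ε f hf y, ← add_div]
  have hsum : noiseOp n ε f y + noiseOp n ε (fun x => 1 - f x) y = 1 := by
    unfold noiseOp
    rw [← Finset.sum_add_distrib]
    have hterm : ∀ x ∈ (univ : Finset (Fin n → Bool)),
        noiseK n ε y x * f x + noiseK n ε y x * (1 - f x) = noiseK n ε y x := by
      intro x _; ring
    rw [Finset.sum_congr rfl hterm, sum_noiseK' n ε y]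
  rw [hsum]

lemma margB_true (n : ℕ) (ε : ℝ) (f : (Fin n → Bool) → ℝ)
    (hf : ∀ x, f x = 0 ∨ f x = 1) :
    margB n f true = expec n (noiseOp n ε f) := by
  rw [expec_noiseOp]
  unfold margB expec
  congr 1
  apply Finset.sum_congr rfl
  intro x _
  rcases hf x with h|h <;> simp [h]

lemma margB_false (n : ℕ) (ε : ℝ) (f : (Fin n → Bool) → ℝ)
    (hf : ∀ x, f x = 0 ∨ f x = 1) :
    margB n f false = expec n (noiseOp n ε (fun x => 1 - f x)) := by
  rw [expec_noiseOp]
  unfold margB expec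
  congr 1
  apply Finset.sum_congr rfl
  intro x _
  rcases hf x with h|h <;> simp [h]

theorem stmt_12 (n : ℕ) (ε : ℝ) (h0 : 0 ≤ ε) (h1 : ε ≤ 1/2)
    (f : (Fin n → Bool) → ℝ) (hf : ∀ x, f x = 0 ∨ f x = 1) :
    mutInfo n ε f = entro n (noiseOp n ε f) + entro n (noiseOp n ε (fun x => 1 - f x)) := by
  have hf0 : ∀ x, 0 ≤ f x := by
    intro x; rcases hf x with h|h <;> simp [h]
  have hf1 : ∀ x, 0 ≤ 1 - f x := by
    intro x; rcases hf x with h|h <;> simp [h]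
  have key : ∀ y : Fin n → Bool,
      (∑ b : Bool, jointP n ε f b y *
        Real.logb 2 (jointP n ε f b y / (margB n f b * margY n ε f y)))
      = (noiseOp n ε f y / 2 ^ n) * Real.logb 2 ((noiseOp n ε f y / 2 ^ n)
            / (expec n (noiseOp n ε f) * (1 / 2 ^ n)))
        + (noiseOp n ε (fun x => 1 - f x) y / 2 ^ n) *
          Real.logb 2 ((noiseOp n ε (fun x => 1 - f x) y / 2 ^ n)
            / (expec n (noiseOp n ε (fun x => 1 - f x)) * (1 / 2 ^ n))) := by
    intro y
    rw [Fintype.sum_bool, jointP_true n ε f hf y, jointP_false n ε f hf y,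
      margY_eq n ε f hf y, margB_true n ε f hf, margB_false n ε f hf, add_comm]
  unfold mutInfo
  rw [Finset.sum_congr rfl (fun y _ => key y), Finset.sum_add_distrib,
    keyE n (noiseOp n ε f) (noiseOp_nonneg n ε h0 h1 f hf0),
    keyE n (noiseOp n ε (fun x => 1 - f x)) (noiseOp_nonneg n ε h0 h1 _ hf1)]
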